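/- Let p be a prime and α, β ≥ 1. For δ ∈ ℕ define ĉ_{δ,α} := ∑ (-1)^i C(δ, i), the sum over all i ∈ {0,…,δ} with i ≡ δ (mod p^α). If δ > β·p^α - (β-1)·p^{α-1} - 1, then p^β divides ĉ_{δ,α}. -/

import Mathlib

open Polynomial Finset

lemma lift_modp (p : ℕ) (f : Polynomial ℤ)
    (h : f.map (Int.castRingHom (ZMod p)) = 0) :
    ∃ h₀ : Polynomial ℤ, f = (p : Polynomial ℤ) * h₀ := by
  have : C ((p : ℕ) : ℤ) ∣ f := by
    rw [Polynomial.C_dvd_iff_dvd_coeff]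
    intro i
    have := congrArg (fun g => Polynomial.coeff g i) h
    simp [Polynomial.coeff_map] at this
    exact_mod_cast (ZMod.intCast_zmod_eq_zero_iff_dvd _ p).mp this
  obtain ⟨h₀, hh⟩ := this
  exact ⟨h₀, by rwa [map_natCast] at hh⟩

lemma E1 (p : ℕ) (hp : p.Prime) (m : ℕ) :
    ∃ h : Polynomial ℤ, (X : Polynomial ℤ) ^ p ^ m - 1 = (X - 1) ^ p ^ m + (p : Polynomial ℤ) * h := by
  haveI : Fact p.Prime := ⟨hp⟩
  obtain ⟨h, hh⟩ := lift_modp p ((X : Polynomial ℤ) ^ p ^ m - 1 - (X - 1) ^ p ^ m) (by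
    simp only [Polynomial.map_sub, Polynomial.map_pow, Polynomial.map_one, Polynomial.map_X]
    rw [sub_pow_char_pow (p := p), one_pow]
    ring)
  exact ⟨h, by linear_combination hh⟩

lemma E2 (p : ℕ) (hp : p.Prime) (a : ℕ) :
    ∃ g : Polynomial ℤ, (∑ k ∈ range p, ((X : Polynomial ℤ) ^ p ^ a) ^ k)
      = (X - 1) ^ (p ^ (a+1) - p ^ a) + (p : Polynomial ℤ) * g := by
  haveI : Fact p.Prime := ⟨hp⟩
  obtain ⟨g, hg⟩ := lift_modp p ((∑ k ∈ range p, ((X : Polynomial ℤ) ^ p ^ a) ^ k) - (X - 1) ^ (p ^ (a+1) - p ^ a)) (by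
    simp only [Polynomial.map_sub, Polynomial.map_pow, Polynomial.map_one, Polynomial.map_X,
      Polynomial.map_sum]
    rw [sub_eq_zero]
    have hXne : ((X : Polynomial (ZMod p)) - 1) ^ p ^ a ≠ 0 := by
      apply pow_ne_zero
      intro hc
      have := congrArg (fun q => Polynomial.coeff q 1) hc
      simp [Polynomial.coeff_one] at this
    apply mul_left_cancel₀ hXne
    have h1 : ((X : Polynomial (ZMod p)) - 1) ^ p ^ a = X ^ p ^ a - 1 := by
      rw [sub_pow_char_pow (p := p), one_pow]
    rw [h1, mul_comm, geom_sum_mul, ← h1, ← pow_add]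
    have h2 : p ^ a + (p ^ (a+1) - p ^ a) = p ^ (a+1) := by
      have : p ^ a ≤ p ^ (a+1) := Nat.pow_le_pow_right hp.pos (by omega)
      omega
    rw [h2, ← pow_mul, ← pow_succ, sub_pow_char_pow (p := p), one_pow])
  exact ⟨g, by linear_combination hg⟩

lemma key_induction {A : Type*} [CommRing A] (π g h z : A) (c φ : ℕ) (hcφ : c ≤ φ)
    (hrel : (π ^ φ + z * g) * (π ^ c + z * h) = 0) :
    ∀ β : ℕ, z ^ β ∣ π ^ (c + β * φ) := by
  have hq : π ^ (φ + c) = -(z * (h * π ^ φ + g * π ^ c + z * (g * h))) := by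
    rw [pow_add]; linear_combination hrel
  intro β
  induction β using Nat.strong_induction_on with
  | _ β IH =>
    match β with
    | 0 => simp
    | β + 1 =>
      obtain ⟨w1, hw1⟩ : z ^ β ∣ π ^ (c + β * φ) := IH β (by omega)
      obtain ⟨w2, hw2⟩ : z ^ β ∣ π ^ (φ + β * φ) := by
        have e2 : φ + β * φ = (c + β * φ) + (φ - c) := by omega
        rw [e2, pow_add, hw1]
        exact ⟨w1 * π ^ (φ - c), by ring⟩
      obtain ⟨w3, hw3⟩ : z ^ (β + 1) ∣ z ^ 2 * π ^ (β * φ) := by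
        match β with
        | 0 => exact ⟨z, by ring⟩
        | β' + 1 =>
          obtain ⟨v, hv⟩ : z ^ β' ∣ π ^ (c + β' * φ) := IH β' (by omega)
          have e3 : (β' + 1) * φ = (c + β' * φ) + (φ - c) := by
            have : (β' + 1) * φ = β' * φ + φ := by ring
            omega
          rw [e3, pow_add π, hv]
          exact ⟨v * π ^ (φ - c), by ring⟩
      refine ⟨-(h * w2 + g * w1 + g * h * w3), ?_⟩
      have e : c + (β + 1) * φ = (φ + c) + β * φ := by ring
      rw [e, pow_add, hq]
      have h1 : π ^ φ * π ^ (β * φ) = π ^ (φ + β * φ) := (pow_add π φ (β*φ)).symm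
      have h2 : π ^ c * π ^ (β * φ) = π ^ (c + β * φ) := (pow_add π c (β*φ)).symm
      linear_combination (-(z*h)) * h1 + (-(z*h)) * hw2 + (-(z*g)) * h2 + (-(z*g)) * hw1 - g*h*hw3


/-- `ĉ_{δ,α} = ∑ (-1)^i C(δ,i)`, summed over `i ∈ {0,…,δ}` with `i ≡ δ (mod p^α)`. -/
def cHat (p α δ : ℕ) : ℤ :=
  ∑ i ∈ Finset.range (δ + 1),
    if i % p ^ α = δ % p ^ α then (-1 : ℤ) ^ i * (δ.choose i : ℤ) else 0

theorem cHat_div_of_large_degree (p : ℕ) (hp : p.Prime) (α β : ℕ) (hα : 1 ≤ α) (hβ : 1 ≤ β)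
    (δ : ℕ)
    (hδ : (δ : ℤ) > (β : ℤ) * (p : ℤ) ^ α - ((β : ℤ) - 1) * (p : ℤ) ^ (α - 1) - 1) :
    (p : ℤ) ^ β ∣ cHat p α δ := by
  obtain ⟨a, rfl⟩ : ∃ a, α = a + 1 := ⟨α - 1, (Nat.succ_pred_eq_of_pos hα).symm⟩
  set q : ℕ := p ^ (a + 1) with hqdef
  set c : ℕ := p ^ a with hcdef
  have hp2 : 2 ≤ p := hp.two_le
  have hqc : q = c * p := by rw [hqdef, hcdef, pow_succ]
  have h2c : 2 * c ≤ q := by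
    rw [hqc]; calc 2 * c = c * 2 := by ring
    _ ≤ c * p := Nat.mul_le_mul_left c hp2
  have hcq : c ≤ q := by omega
  set φq : ℕ := q - c with hφdef
  have hcφ : c ≤ φq := by omega
  -- numeric bound
  have hge : c + β * φq ≤ δ := by
    have hcast : ((c + β * φq : ℕ) : ℤ) = (β : ℤ) * (q : ℤ) - ((β:ℤ) - 1) * (c : ℤ) := by
      push_cast [hφdef, Nat.cast_sub hcq]
      ring
    have hδ' : (δ : ℤ) > (β : ℤ) * (q : ℤ) - ((β:ℤ) - 1) * (c : ℤ) - 1 := by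
      convert hδ using 3
      · push_cast [hqdef]; ring
      · push_cast [hcdef]; norm_num
    have : ((c + β * φq : ℕ) : ℤ) ≤ (δ : ℤ) := by omega
    exact_mod_cast this
  -- the ring A
  let A := AddMonoidAlgebra ℤ (ZMod q)
  let u : A := AddMonoidAlgebra.single (1 : ZMod q) (1 : ℤ)
  have hupow : ∀ k : ℕ, u ^ k = AddMonoidAlgebra.single ((k : ZMod q)) (1 : ℤ) := by
    intro k
    rw [show u ^ k = AddMonoidAlgebra.single (k • (1 : ZMod q)) ((1:ℤ) ^ k) from
      AddMonoidAlgebra.single_pow (1 : ZMod q) (1:ℤ) k]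
    rw [nsmul_eq_mul, mul_one, one_pow]
  have huq : u ^ q = 1 := by
    rw [hupow q, ZMod.natCast_self, ← AddMonoidAlgebra.one_def]
  let ψ : Polynomial ℤ →ₐ[ℤ] A := Polynomial.aeval u
  obtain ⟨h, hh⟩ := E1 p hp a
  obtain ⟨g, hg⟩ := E2 p hp a
  -- geom sum identity in ℤ[X]
  have E3 : (∑ k ∈ range p, ((X : Polynomial ℤ) ^ c) ^ k) * ((X:Polynomial ℤ) ^ c - 1)
      = (X : Polynomial ℤ) ^ q - 1 := by
    rw [geom_sum_mul, ← pow_mul, ← hqc]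
  -- push to A
  have hrel : (((u - 1) : A) ^ φq + (p : A) * ψ g) * ((u - 1) ^ c + (p : A) * ψ h) = 0 := by
    have h1 : ψ ((X - 1) ^ φq + (p : Polynomial ℤ) * g) = (u - 1) ^ φq + (p : A) * ψ g := by
      simp [ψ, map_add, map_mul, map_pow, map_sub, map_natCast]
    have h2 : ψ ((X - 1) ^ c + (p : Polynomial ℤ) * h) = (u - 1) ^ c + (p : A) * ψ h := by
      simp [ψ, map_add, map_mul, map_pow, map_sub, map_natCast]
    rw [← h1, ← h2, ← hg, ← hh, ← map_mul, E3]
    simp [ψ, map_sub, map_pow, huq]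
  have dvd1 : (p : A) ^ β ∣ (u - 1) ^ (c + β * φq) :=
    key_induction (u - 1) (ψ g) (ψ h) (p : A) c φq hcφ hrel β
  have dvd2 : (p : A) ^ β ∣ (u - 1) ^ δ := by
    have : (u - 1) ^ δ = (u - 1) ^ (c + β * φq) * (u - 1) ^ (δ - (c + β * φq)) := by
      rw [← pow_add]; congr 1; omega
    rw [this]; exact dvd1.mul_right _
  obtain ⟨r, hr⟩ := dvd2
  -- evaluate coefficient at (δ : ZMod q)
  set t : ZMod q := ((δ : ℕ) : ZMod q) with htdef
  have hexp : (u - 1) ^ δ = ∑ k ∈ range (δ + 1),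
      AddMonoidAlgebra.single ((k : ZMod q)) ((-1 : ℤ) ^ (δ - k) * (δ.choose k : ℤ)) := by
    rw [sub_eq_add_neg, add_pow]
    refine Finset.sum_congr rfl fun k hk => ?_
    have hneg1 : (-1 : A) = AddMonoidAlgebra.single (0 : ZMod q) (-1 : ℤ) := by
      rw [AddMonoidAlgebra.one_def]
      exact (AddMonoidAlgebra.single_neg (0 : ZMod q) (1:ℤ)).symm
    have hneg : (-1 : A) ^ (δ - k) = AddMonoidAlgebra.single (0 : ZMod q) ((-1:ℤ) ^ (δ - k)) := by
      rw [hneg1, AddMonoidAlgebra.single_pow, smul_zero]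
    have hnat : ((δ.choose k : ℕ) : A) = AddMonoidAlgebra.single (0 : ZMod q) (δ.choose k : ℤ) := rfl
    rw [hupow k, hneg, hnat, AddMonoidAlgebra.single_mul_single, AddMonoidAlgebra.single_mul_single]
    simp
  -- apply at t
  have happ := congrArg (fun f : AddMonoidAlgebra ℤ (ZMod q) => f.coeff t) hr
  rw [hexp] at happ
  have hL : (∑ k ∈ range (δ + 1),
      (AddMonoidAlgebra.single ((k : ZMod q)) ((-1 : ℤ) ^ (δ - k) * (δ.choose k : ℤ)) : AddMonoidAlgebra ℤ (ZMod q)).coeff t)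
      = ∑ k ∈ range (δ + 1),
        if (k : ZMod q) = t then (-1 : ℤ) ^ (δ - k) * (δ.choose k : ℤ) else 0 := by
    refine Finset.sum_congr rfl fun k hk => ?_
    exact Finsupp.single_apply
  have hpcast : ((p : A) ^ β) = AddMonoidAlgebra.single (0 : ZMod q) ((p:ℤ) ^ β) := by
    have : ((p ^ β : ℕ) : A) = AddMonoidAlgebra.single (0 : ZMod q) ((p ^ β : ℕ) : ℤ) := rfl
    push_cast at this ⊢
    exact this
  have hR : ((p : A) ^ β * r).coeff t = (p:ℤ) ^ β * r.coeff t := by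
    rw [hpcast, AddMonoidAlgebra.coeff_single_zero_mul]
  have hF : (∑ k ∈ range (δ + 1),
      if (k : ZMod q) = t then (-1 : ℤ) ^ (δ - k) * (δ.choose k : ℤ) else 0) = (p:ℤ) ^ β * r.coeff t := by
    rw [← hL, ← Finsupp.finset_sum_apply, ← AddMonoidAlgebra.coeff_sum]
    exact happ.trans hR
  -- relate cHat to F
  have hchat : cHat p (a + 1) δ = (-1:ℤ) ^ δ * (∑ k ∈ range (δ + 1),
      if (k : ZMod q) = t then (-1 : ℤ) ^ (δ - k) * (δ.choose k : ℤ) else 0) := by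
    rw [Finset.mul_sum]
    unfold cHat
    refine Finset.sum_congr rfl fun k hk => ?_
    have hk' : k ≤ δ := by simp at hk; omega
    have hcond : (k % p ^ (a+1) = δ % p ^ (a+1)) ↔ ((k : ZMod q) = t) := by
      rw [htdef, ZMod.natCast_eq_natCast_iff]
      exact Iff.rfl
    rw [mul_ite, mul_zero]
    by_cases hc : (k : ZMod q) = t
    · rw [if_pos ((hcond).mpr hc), if_pos hc]
      have h1 : (-1:ℤ)^δ = (-1)^(δ-k) * (-1)^k := by rw [← pow_add]; congr 1; omega
      have h2 : (-1:ℤ)^(δ-k) * (-1)^(δ-k) = 1 := by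
        rw [← pow_add]; exact Even.neg_one_pow ⟨δ-k, rfl⟩
      rw [h1]
      linear_combination (-((-1:ℤ)^k * (δ.choose k : ℤ))) * h2
    · rw [if_neg (fun hcc => hc (hcond.mp hcc)), if_neg hc]
  rw [hchat, hF]
  exact Dvd.dvd.mul_left (Dvd.intro _ rfl) _
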